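/- Main theorem (case n = 2): Let x₁ ≠ x₂ be reals, P(x) = p₂(x − x₁)(x − x₂) with p₂ ≠ 0, and Q a polynomial of degree at most 2. Let B = B(P,Q) and let Δ(Q) be the 2×2 matrix [[0, Q(x₂)], [Q(x₁), Q[x₁,x₂]]]. Then det(b_{ij})_{i,j=2}^2 = p₂·Q[x₁,x₂] and det B = p₂²·det Δ(Q) = −p₂²·Q(x₁)Q(x₂). -/

import Mathlib

open Polynomial

/-- The quotient polynomial `(P(x)Q(y) - P(y)Q(x))/(x - y)` in `R[y][x]`. -/
noncomputable def bezPoly {R : Type*} [CommRing R] (P Q : R[X]) :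
    Polynomial (Polynomial R) :=
  (P.map C * C Q - C P * Q.map C) /ₘ (X - C X)

/-- The `n × n` Bezout matrix: `bezMat n P Q i j` is the coefficient of
`x^i y^j` in `(P(x)Q(y) - P(y)Q(x))/(x - y)` (`0`-based indexing, so it is
the entry `b_{i+1, j+1}` of the paper). -/
noncomputable def bezMat {R : Type*} [CommRing R] (n : ℕ) (P Q : R[X]) :
    Matrix (Fin n) (Fin n) R :=
  fun i j => ((bezPoly P Q).coeff i).coeff j

lemma bezPoly_explicit {R : Type*} [CommRing R] (p₀ p₁ p₂ q₀ q₁ q₂ : R) :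
    bezPoly (C p₀ + C p₁ * X + C p₂ * X ^ 2) (C q₀ + C q₁ * X + C q₂ * X ^ 2) =
      C (C (p₁ * q₀ - p₀ * q₁) + C (p₂ * q₀ - p₀ * q₂) * X) +
        C (C (p₂ * q₀ - p₀ * q₂) + C (p₂ * q₁ - p₁ * q₂) * X) * X := by
  unfold bezPoly
  have hmo : (X - C (X : R[X])).Monic := monic_X_sub_C _
  have key : ((C p₀ + C p₁ * X + C p₂ * X ^ 2 : R[X]).map C * C (C q₀ + C q₁ * X + C q₂ * X ^ 2)
      - C (C p₀ + C p₁ * X + C p₂ * X ^ 2) * (C q₀ + C q₁ * X + C q₂ * X ^ 2 : R[X]).map C)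
      = (X - C X) * (C (C (p₁ * q₀ - p₀ * q₁) + C (p₂ * q₀ - p₀ * q₂) * X) +
        C (C (p₂ * q₀ - p₀ * q₂) + C (p₂ * q₁ - p₁ * q₂) * X) * X) := by
    simp only [Polynomial.map_add, Polynomial.map_mul, Polynomial.map_pow, map_C, map_X,
      map_sub, map_add, map_mul, map_pow]
    ring
  rw [key, mul_divByMonic_cancel_left _ hmo]

theorem bezMat_main_two (p₂ x₁ x₂ : ℝ) (hp : p₂ ≠ 0) (hx : x₁ ≠ x₂)
    (P Q : ℝ[X]) (hP : P = C p₂ * ((X - C x₁) * (X - C x₂)))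
    (hQ : Q.degree ≤ 2) :
    bezMat 2 P Q 1 1 = p₂ * ((Q.eval x₂ - Q.eval x₁) / (x₂ - x₁)) ∧
      (bezMat 2 P Q).det =
        p₂ ^ 2 *
          Matrix.det !![0, Q.eval x₂;
            Q.eval x₁, (Q.eval x₂ - Q.eval x₁) / (x₂ - x₁)] ∧
      (bezMat 2 P Q).det = -(p₂ ^ 2 * (Q.eval x₁ * Q.eval x₂)) := by
  have hxne : x₂ - x₁ ≠ 0 := sub_ne_zero.mpr (Ne.symm hx)
  set q₀ := Q.coeff 0; set q₁ := Q.coeff 1; set q₂ := Q.coeff 2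
  have hQd : Q.natDegree < 3 :=
    Nat.lt_succ_of_le (Polynomial.natDegree_le_iff_degree_le.mpr hQ)
  have hQe : Q = C q₀ + C q₁ * X + C q₂ * X ^ 2 := by
    conv_lhs => rw [Q.as_sum_range' 3 hQd]
    simp [Finset.sum_range_succ, ← Polynomial.C_mul_X_pow_eq_monomial]
    rfl
  have hPe : P = C (p₂ * x₁ * x₂) + C (-(p₂ * (x₁ + x₂))) * X + C p₂ * X ^ 2 := by
    rw [hP]; ring_nf; simp [C_mul, C_neg, C_add]; ring
  have hbez := bezPoly_explicit (p₂ * x₁ * x₂) (-(p₂ * (x₁ + x₂))) p₂ q₀ q₁ q₂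
  rw [← hPe, ← hQe] at hbez
  have hB : ∀ i j : Fin 2, bezMat 2 P Q i j = ((bezPoly P Q).coeff i).coeff j := fun _ _ => rfl
  have e00 : bezMat 2 P Q 0 0 = -(p₂ * (x₁ + x₂)) * q₀ - p₂ * x₁ * x₂ * q₁ := by
    rw [hB, hbez]; simp
  have e01 : bezMat 2 P Q 0 1 = p₂ * q₀ - p₂ * x₁ * x₂ * q₂ := by
    rw [hB, hbez]; simp
  have e10 : bezMat 2 P Q 1 0 = p₂ * q₀ - p₂ * x₁ * x₂ * q₂ := by
    rw [hB, hbez]; simp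
  have e11 : bezMat 2 P Q 1 1 = p₂ * q₁ - -(p₂ * (x₁ + x₂)) * q₂ := by
    rw [hB, hbez]; simp
  have hev₁ : Q.eval x₁ = q₀ + q₁ * x₁ + q₂ * x₁ ^ 2 := by rw [hQe]; simp
  have hev₂ : Q.eval x₂ = q₀ + q₁ * x₂ + q₂ * x₂ ^ 2 := by rw [hQe]; simp
  have hdiv : (Q.eval x₂ - Q.eval x₁) / (x₂ - x₁) = q₁ + q₂ * (x₁ + x₂) := by
    rw [hev₁, hev₂]; field_simp; ring
  have hdet : (bezMat 2 P Q).det =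
      bezMat 2 P Q 0 0 * bezMat 2 P Q 1 1 - bezMat 2 P Q 0 1 * bezMat 2 P Q 1 0 :=
    Matrix.det_fin_two _
  refine ⟨by rw [e11, hdiv]; ring, ?_, ?_⟩
  · rw [hdet, e00, e01, e10, e11]
    simp [Matrix.det_fin_two_of, hdiv, hev₁, hev₂]
    ring
  · rw [hdet, e00, e01, e10, e11, hev₁, hev₂]
    ring
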